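/- Let κ > 0 and let p̲ > 0 satisfy ln(1 + 1/(2κp̲)) = (μ − a)/p̲ − 1 with μ > a. If F(x) = 1 − p̲/(x − a) on [a + p̲, a + p̲ + 1/(2κ)] (with a mass point at the upper endpoint), then the mean of F equals μ, i.e., ∫ x dF(x) = μ. -/

import Mathlib

open Real

theorem pareto_mean (κ μ a p : ℝ) (hκ : 0 < κ) (hp : 0 < p) (hμ : a < μ)
    (hroot : Real.log (1 + 1 / (2 * κ * p)) = (μ - a) / p - 1) :
    (∫ x in (a + p)..(a + p + 1 / (2 * κ)), x * (p / (x - a) ^ 2)) +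
      (a + p + 1 / (2 * κ)) * (p / (p + 1 / (2 * κ))) = μ := by
  have hc0 : 0 < 1 / (2 * κ) := by positivity
  set c := 1 / (2 * κ) with hc
  have hderiv : ∀ x ∈ Set.uIcc (a + p) (a + p + c),
      HasDerivAt (fun x => p * (Real.log (x - a) - a / (x - a))) (x * (p / (x - a) ^ 2)) x := by
    intro x hx
    rw [Set.uIcc_of_le (by linarith)] at hx
    have hxa : 0 < x - a := by have := hx.1; linarith
    have h1 : HasDerivAt (fun x : ℝ => x - a) 1 x := (hasDerivAt_id x).sub_const a
    have hlog : HasDerivAt (fun x => Real.log (x - a)) (1 / (x - a)) x := by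
      have := (Real.hasDerivAt_log hxa.ne').comp x h1
      simpa [one_div, Function.comp_def] using this
    have hinv : HasDerivAt (fun x => a / (x - a)) (a * (-1 / (x - a) ^ 2)) x := by
      have := (h1.inv hxa.ne').const_mul a
      simpa [div_eq_mul_inv] using this
    have : HasDerivAt (fun x => p * (Real.log (x - a) - a / (x - a))) _ x := (hlog.sub hinv).const_mul p
    convert this using 1
    field_simp [hxa.ne']
    ring
  have hcont : IntervalIntegrable (fun x => x * (p / (x - a) ^ 2)) MeasureTheory.volume
      (a + p) (a + p + c) := by
    apply ContinuousOn.intervalIntegrable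
    apply ContinuousOn.mul continuousOn_id
    apply ContinuousOn.div continuousOn_const
    · exact ((continuousOn_id.sub continuousOn_const).pow 2)
    · intro x hx
      rw [Set.uIcc_of_le (by linarith)] at hx
      have hxa : 0 < x - a := by have := hx.1; linarith
      positivity
  have hint := intervalIntegral.integral_eq_sub_of_hasDerivAt hderiv hcont
  rw [hint]
  have h1 : a + p + c - a = p + c := by ring
  have h2 : a + p - a = p := by ring
  rw [h1, h2]
  have hlogdiv : Real.log (p + c) - Real.log p = Real.log (1 + 1 / (2 * κ * p)) := by
    rw [← Real.log_div (by linarith) hp.ne']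
    congr 1
    rw [hc]
    field_simp
  have hpc : 0 < p + c := by linarith
  rw [hroot] at hlogdiv
  have : Real.log (p + c) - Real.log p = (μ - a) / p - 1 := hlogdiv
  field_simp at this ⊢
  nlinarith [this, hpc.ne', hp.ne']
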